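/- For a polynomial f : ℝ → ℝ, the standard Gaussian measure μ on ℝ, and any k ∈ ℕ, the Houdré–Kagan inequalities hold: ∑_{l=1}^{2k} ((−1)^{l+1}/l!) ∫ (f^{(l)})² dμ ≤ ∫ f² dμ − (∫ f dμ)² ≤ ∑_{l=1}^{2k−1} ((−1)^{l+1}/l!) ∫ (f^{(l)})² dμ. -/

import Mathlib

open MeasureTheory Polynomial ProbabilityTheory Real Filter


noncomputable def phi (x : ℝ) : ℝ := (Real.sqrt (2 * Real.pi))⁻¹ * Real.exp (-x ^ 2 / 2)

lemma phi_eq : gaussianPDFReal 0 1 = phi := by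
  ext x
  simp [gaussianPDFReal_def, phi]

lemma phi_nonneg (x : ℝ) : 0 ≤ phi x := by
  unfold phi; positivity

@[fun_prop] lemma measurable_phi : Measurable phi := by
  unfold phi; fun_prop

lemma gaussianPDF_eq : gaussianPDF 0 1 = fun x => ((Real.toNNReal (phi x) : NNReal) : ENNReal) := by
  ext x; rw [gaussianPDF_def, ← phi_eq]; rfl

lemma gauss_int_eq (g : ℝ → ℝ) :
    ∫ x, g x ∂(gaussianReal 0 1) = ∫ x, phi x * g x := by
  rw [gaussianReal_of_var_ne_zero 0 one_ne_zero, gaussianPDF_eq,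
    integral_withDensity_eq_integral_smul (by fun_prop) g]
  congr 1; ext x
  simp [NNReal.smul_def, Real.coe_toNNReal _ (phi_nonneg x)]

lemma integrable_monomial_gauss (n : ℕ) :
    Integrable (fun x : ℝ => x ^ n * Real.exp (-x ^ 2 / 2)) := by
  have h := integrable_rpow_mul_exp_neg_mul_sq (b := 1/2) (by norm_num) (s := n)
    (by exact lt_of_lt_of_le neg_one_lt_zero (Nat.cast_nonneg n))
  have he : (fun x : ℝ => x ^ n * Real.exp (-x ^ 2 / 2))
      = fun x : ℝ => x ^ (n : ℝ) * Real.exp (-(1/2) * x ^ 2) := by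
    funext x; rw [Real.rpow_natCast]; ring_nf
  rw [he]; exact h

lemma integrable_poly_mul_gauss (p : ℝ[X]) :
    Integrable (fun x : ℝ => phi x * p.eval x) := by
  have : (fun x : ℝ => phi x * p.eval x) = fun x =>
      ∑ i ∈ Finset.range (p.natDegree + 1),
        ((Real.sqrt (2 * Real.pi))⁻¹ * p.coeff i) * (x ^ i * Real.exp (-x ^ 2 / 2)) := by
    funext x
    rw [eval_eq_sum_range, Finset.mul_sum]
    refine Finset.sum_congr rfl fun i _ => by unfold phi; ring
  rw [this]
  exact integrable_finset_sum _ fun i _ => ((integrable_monomial_gauss i).const_mul _)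

lemma integrable_poly (p : ℝ[X]) :
    Integrable (fun x => p.eval x) (gaussianReal 0 1) := by
  rw [gaussianReal_of_var_ne_zero 0 one_ne_zero, gaussianPDF_eq,
    integrable_withDensity_iff_integrable_smul (by fun_prop)]
  refine (integrable_poly_mul_gauss p).congr ?_
  filter_upwards with x
  simp [NNReal.smul_def, Real.coe_toNNReal _ (phi_nonneg x)]

-- new part
lemma phi_neg (x : ℝ) : phi (-x) = phi x := by simp [phi]

lemma tendsto_poly_gauss_atTop (p : ℝ[X]) :
    Tendsto (fun x => p.eval x * phi x) atTop (nhds 0) := by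
  have key : (fun x => p.eval x * phi x) = fun x =>
      (Real.sqrt (2 * Real.pi))⁻¹ *
        ((p.eval x / Real.exp x) * (Real.exp (1/2) * Real.exp (-(x-1)^2/2))) := by
    funext x
    have hE : Real.exp (1/2) * Real.exp (-(x-1)^2/2) / Real.exp x = Real.exp (-x^2/2) := by
      rw [← Real.exp_add, ← Real.exp_sub]; congr 1; ring
    rw [phi, show (p.eval x / Real.exp x) * (Real.exp (1/2) * Real.exp (-(x-1)^2/2))
        = p.eval x * (Real.exp (1/2) * Real.exp (-(x-1)^2/2) / Real.exp x) by ring, hE]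
    ring
  rw [key]
  have h2 : Tendsto (fun x : ℝ => -(x-1)^2/2) atTop atBot := by
    apply Tendsto.atBot_div_const (by norm_num : (0:ℝ) < 2)
    apply Filter.tendsto_neg_atTop_atBot.comp
    exact (tendsto_pow_atTop (two_ne_zero)).comp (tendsto_atTop_add_const_right _ (-1) tendsto_id)
  have h3 : Tendsto (fun x : ℝ => Real.exp (1/2) * Real.exp (-(x-1)^2/2)) atTop (nhds 0) := by
    have := (Real.tendsto_exp_atBot.comp h2).const_mul (Real.exp (1/2))
    simpa using this
  have h4 := ((p.tendsto_div_exp_atTop).mul h3).const_mul ((Real.sqrt (2 * Real.pi))⁻¹)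
  simpa using h4

lemma tendsto_poly_gauss_atBot (p : ℝ[X]) :
    Tendsto (fun x => p.eval x * phi x) atBot (nhds 0) := by
  have h := (tendsto_poly_gauss_atTop (p.comp (-X))).comp tendsto_neg_atBot_atTop
  refine h.congr fun x => ?_
  simp [Function.comp, phi_neg]

lemma hasDerivAt_phi (x : ℝ) : HasDerivAt phi (-x * phi x) x := by
  have h1 : HasDerivAt (fun x : ℝ => -x^2/2) (-x) x := by
    have := ((hasDerivAt_pow 2 x).neg).div_const 2
    exact this.congr_deriv (by ring)
  have h2 := (h1.exp).const_mul ((Real.sqrt (2 * Real.pi))⁻¹)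
  unfold phi
  exact h2.congr_deriv (by ring)

lemma hasDerivAt_poly_gauss (p : ℝ[X]) (x : ℝ) :
    HasDerivAt (fun x => p.eval x * phi x)
      (((derivative p).eval x - x * p.eval x) * phi x) x := by
  have := (p.hasDerivAt x).mul (hasDerivAt_phi x)
  exact this.congr_deriv (by ring)

lemma gauss_ibp (p : ℝ[X]) :
    ∫ x, phi x * ((X * p).eval x) = ∫ x, phi x * ((derivative p).eval x) := by
  have hq : Integrable (fun x => ((derivative p).eval x - x * p.eval x) * phi x) := by
    refine (integrable_poly_mul_gauss (derivative p - X * p)).congr ?_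
    filter_upwards with x
    simp only [eval_sub, eval_mul, eval_X]
    ring
  have key : ∫ x, ((derivative p).eval x - x * p.eval x) * phi x = 0 := by
    have hIoi : ∫ x in Set.Ioi (0:ℝ), ((derivative p).eval x - x * p.eval x) * phi x
        = 0 - p.eval 0 * phi 0 :=
      integral_Ioi_of_hasDerivAt_of_tendsto
        ((hasDerivAt_poly_gauss p 0).continuousAt).continuousWithinAt
        (fun x _ => hasDerivAt_poly_gauss p x) hq.integrableOn (tendsto_poly_gauss_atTop p)
    have hIic : ∫ x in Set.Iic (0:ℝ), ((derivative p).eval x - x * p.eval x) * phi x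
        = p.eval 0 * phi 0 - 0 :=
      integral_Iic_of_hasDerivAt_of_tendsto
        ((hasDerivAt_poly_gauss p 0).continuousAt).continuousWithinAt
        (fun x _ => hasDerivAt_poly_gauss p x) hq.integrableOn (tendsto_poly_gauss_atBot p)
    rw [← intervalIntegral.integral_Iic_add_Ioi (b := (0:ℝ)) hq.integrableOn hq.integrableOn,
      hIoi, hIic]
    ring
  have h4 : ∫ x, (phi x * (derivative p).eval x - phi x * ((X*p).eval x)) = 0 := by
    rw [← key]; congr 1; funext x; simp only [eval_mul, eval_X]; ring
  have h3 := integral_sub (μ := (volume : Measure ℝ))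
    (f := fun x => phi x * (derivative p).eval x) (g := fun x => phi x * ((X*p).eval x))
    (integrable_poly_mul_gauss _) (integrable_poly_mul_gauss _)
  rw [h4] at h3
  linarith [h3]

-- part C
noncomputable def H (n : ℕ) : ℝ[X] := (hermite n).map (Int.castRingHom ℝ)

lemma H_zero : H 0 = 1 := by simp [H, hermite_zero]

lemma H_succ (n : ℕ) : H (n + 1) = X * H n - derivative (H n) := by
  rw [H, hermite_succ]
  simp [Polynomial.map_sub, Polynomial.map_mul, derivative_map, H]

lemma H_natDegree (n : ℕ) : (H n).natDegree = n := by
  rw [H, natDegree_map_eq_of_injective (RingHom.injective_int _), natDegree_hermite]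

lemma H_coeff_self (n : ℕ) : (H n).coeff n = 1 := by
  rw [H, coeff_map, coeff_hermite_self]; simp

lemma H_deriv : ∀ n : ℕ, derivative (H n) = (n : ℝ) • H (n - 1) := by
  have key : ∀ n : ℕ, derivative (H (n + 1)) = ((n : ℝ) + 1) • H n := by
    intro n
    induction n with
    | zero => simp [H_succ, H_zero]
    | succ m ih =>
      rw [H_succ (m+1), derivative_sub, derivative_mul, derivative_X, one_mul, ih,
        derivative_smul]
      have e1 : X * (((m:ℝ)+1) • H m) - ((m:ℝ)+1) • derivative (H m)
          = ((m:ℝ)+1) • H (m+1) := by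
        rw [H_succ m, smul_sub, mul_smul_comm]
      rw [add_sub_assoc, e1]
      push_cast
      module
  intro n
  cases n with
  | zero => simp [H_zero]
  | succ m => rw [key m]; push_cast; simp

noncomputable def Ig (p : ℝ[X]) : ℝ := ∫ x, p.eval x ∂(gaussianReal 0 1)

lemma Ig_add (p q : ℝ[X]) : Ig (p + q) = Ig p + Ig q := by
  unfold Ig
  simp only [eval_add]
  exact integral_add (integrable_poly p) (integrable_poly q)

lemma Ig_smul (c : ℝ) (p : ℝ[X]) : Ig (c • p) = c * Ig p := by
  unfold Ig
  simp only [eval_smul, smul_eq_mul]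
  exact integral_const_mul c _

lemma Ig_sub (p q : ℝ[X]) : Ig (p - q) = Ig p - Ig q := by
  unfold Ig
  simp only [eval_sub]
  exact integral_sub (integrable_poly p) (integrable_poly q)

lemma Ig_sum {ι : Type*} (s : Finset ι) (f : ι → ℝ[X]) :
    Ig (∑ i ∈ s, f i) = ∑ i ∈ s, Ig (f i) := by
  unfold Ig
  simp only [eval_finset_sum]
  exact integral_finset_sum s fun i _ => integrable_poly (f i)

lemma Ig_one : Ig 1 = 1 := by
  unfold Ig
  simp only [eval_one]
  simp

lemma Ig_ibp (p : ℝ[X]) : Ig (X * p) = Ig (derivative p) := by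
  unfold Ig
  rw [gauss_int_eq, gauss_int_eq]
  exact gauss_ibp p

lemma Ig_H (n : ℕ) : Ig (H n) = if n = 0 then 1 else 0 := by
  cases n with
  | zero => simp [H_zero, Ig_one]
  | succ m =>
    rw [H_succ, Ig_sub, Ig_ibp]
    simp

lemma ortho_step (m n : ℕ) :
    Ig (H (m + 1) * H n) = (n : ℝ) * Ig (H m * H (n - 1)) := by
  have e1 : H (m+1) * H n = X * (H m * H n) - derivative (H m) * H n := by
    rw [H_succ]; ring
  rw [e1, Ig_sub, Ig_ibp, derivative_mul, Ig_add, H_deriv n, mul_smul_comm, Ig_smul]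
  ring

lemma ortho (m n : ℕ) : Ig (H m * H n) = if m = n then (Nat.factorial m : ℝ) else 0 := by
  induction m generalizing n with
  | zero =>
    rw [H_zero, one_mul, Ig_H]
    cases n <;> simp
  | succ m ih =>
    rw [ortho_step, ih (n-1)]
    cases n with
    | zero => simp
    | succ j =>
      simp only [Nat.add_sub_cancel, Nat.succ.injEq, Nat.add_right_cancel_iff]
      by_cases hmj : m = j
      · subst hmj
        simp [Nat.factorial_succ]
        try push_cast
        try ring
      · simp [hmj]

-- Part D
lemma exists_expansion : ∀ (N : ℕ) (p : ℝ[X]), p.natDegree ≤ N →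
    ∃ c : ℕ → ℝ, p = ∑ n ∈ Finset.range (N+1), c n • H n := by
  intro N
  induction N with
  | zero =>
    intro p hp
    refine ⟨fun _ => p.coeff 0, ?_⟩
    rw [Polynomial.eq_C_of_natDegree_le_zero hp]
    simp [H_zero, Polynomial.smul_eq_C_mul]
  | succ N ih =>
    intro p hp
    set q := p - p.coeff (N+1) • H (N+1) with hq
    have hqdeg : q.natDegree ≤ N := by
      rw [Polynomial.natDegree_le_iff_coeff_eq_zero]
      intro i hi
      rw [hq]
      simp only [Polynomial.coeff_sub, Polynomial.coeff_smul, smul_eq_mul]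
      rcases eq_or_lt_of_le (Nat.succ_le_of_lt hi) with h | h
      · rw [← h, H_coeff_self]
        ring
      · rw [Polynomial.coeff_eq_zero_of_natDegree_lt (p := p) (n := i) (by omega),
          Polynomial.coeff_eq_zero_of_natDegree_lt (p := H (N+1)) (n := i)
            (by rw [H_natDegree]; omega)]
        ring
    obtain ⟨c, hc⟩ := ih q hqdeg
    refine ⟨fun n => if n = N+1 then p.coeff (N+1) else c n, ?_⟩
    rw [Finset.sum_range_succ]
    have : ∑ n ∈ Finset.range (N+1),
        (if n = N+1 then p.coeff (N+1) else c n) • H n = q := by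
      rw [hc]
      refine Finset.sum_congr rfl fun n hn => ?_
      rw [if_neg (by simp at hn; omega)]
    rw [this]
    have h2 : (fun n => if n = N+1 then p.coeff (N+1) else c n) (N+1) = p.coeff (N+1) := by
      simp
    rw [h2, hq]
    ring

lemma Ig_sq_sum (s : Finset ℕ) (b : ℕ → ℝ) :
    Ig ((∑ n ∈ s, b n • H n)^2) = ∑ n ∈ s, (b n)^2 * n.factorial := by
  rw [sq, Finset.sum_mul_sum, Ig_sum]
  refine Finset.sum_congr rfl fun i hi => ?_
  rw [Ig_sum]
  have h1 : ∀ j ∈ s, Ig ((b i • H i) * (b j • H j))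
      = if i = j then b i * b j * (i.factorial : ℝ) else 0 := by
    intro j _
    rw [smul_mul_smul_comm, Ig_smul, ortho]
    split <;> ring
  rw [Finset.sum_congr rfl h1, Finset.sum_ite_eq, if_pos hi]
  ring

lemma iter_deriv_H (n l : ℕ) :
    derivative^[l] (H n) = (n.descFactorial l : ℝ) • H (n - l) := by
  induction l with
  | zero => simp
  | succ l ih =>
    rw [Function.iterate_succ_apply', ih, derivative_smul, H_deriv, Nat.descFactorial_succ,
      smul_smul, Nat.sub_sub]
    congr 1
    push_cast
    ring

lemma expand_deriv (c : ℕ → ℝ) (M l : ℕ) :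
    derivative^[l] (∑ n ∈ Finset.range M, c n • H n)
      = ∑ j ∈ Finset.range (M - l), (c (l + j) * ((l+j).descFactorial l : ℝ)) • H j := by
  rw [Polynomial.iterate_derivative_sum]
  have h1 : ∀ n ∈ Finset.range M, derivative^[l] (c n • H n)
      = (c n * (n.descFactorial l : ℝ)) • H (n - l) := by
    intro n _
    rw [Polynomial.iterate_derivative_smul, iter_deriv_H, smul_smul]
  rw [Finset.sum_congr rfl h1]
  have h2 : ∑ n ∈ Finset.range M, (c n * (n.descFactorial l : ℝ)) • H (n - l)
      = ∑ n ∈ Finset.Ico l M, (c n * (n.descFactorial l : ℝ)) • H (n - l) := by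
    rw [Finset.range_eq_Ico]
    refine (Finset.sum_subset (Finset.Ico_subset_Ico (Nat.zero_le l) le_rfl) ?_).symm
    intro n hn hn2
    simp only [Finset.mem_Ico] at hn hn2
    have hl : n < l := by omega
    rw [Nat.descFactorial_eq_zero_iff_lt.mpr hl]
    simp
  rw [h2, Finset.sum_Ico_eq_sum_range]
  refine Finset.sum_congr rfl fun j _ => ?_
  simp [Nat.add_sub_cancel_left]

lemma alt_binom (n' m : ℕ) :
    1 - ∑ l ∈ Finset.Icc 1 m, (-1:ℝ)^(l+1) * ((n'+1).choose l) = (-1)^m * (n'.choose m) := by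
  induction m with
  | zero => simp
  | succ m ih =>
    rw [Finset.sum_Icc_succ_top (by omega : 1 ≤ m + 1)]
    have hc : (((n'+1).choose (m+1) : ℝ)) = (n'.choose m : ℝ) + (n'.choose (m+1) : ℝ) := by
      rw [Nat.choose_succ_succ]
      push_cast
      ring
    linear_combination ih - (-1:ℝ)^m * hc

-- assembly
lemma Ig_sq (p : ℝ[X]) : Ig (p^2) = ∫ x, (p.eval x)^2 ∂(gaussianReal 0 1) := by
  unfold Ig; simp only [eval_pow]

lemma desc_fact_identity (l j : ℕ) :
    ((l+j).descFactorial l)^2 * j.factorial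
      = l.factorial * ((l+j).factorial * (l+j).choose l) := by
  have h1 : (l+j).descFactorial l = l.factorial * (l+j).choose l :=
    Nat.descFactorial_eq_factorial_mul_choose _ _
  have h2 : (l+j).choose l * l.factorial * j.factorial = (l+j).factorial := by
    have := Nat.choose_mul_factorial_mul_factorial (Nat.le_add_right l j)
    rwa [Nat.add_sub_cancel_left] at this
  rw [h1, ← h2]
  ring

theorem houdre_kagan (f : Polynomial ℝ) (k : ℕ) (hk : 1 ≤ k) :
    (∑ l ∈ Finset.Icc 1 (2 * k), (-1 : ℝ) ^ (l + 1) / (Nat.factorial l) *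
        ∫ x, ((derivative^[l] f).eval x) ^ 2 ∂(gaussianReal 0 1)) ≤
      (∫ x, f.eval x ^ 2 ∂(gaussianReal 0 1)) -
        (∫ x, f.eval x ∂(gaussianReal 0 1)) ^ 2 ∧
    (∫ x, f.eval x ^ 2 ∂(gaussianReal 0 1)) -
        (∫ x, f.eval x ∂(gaussianReal 0 1)) ^ 2 ≤
      ∑ l ∈ Finset.Icc 1 (2 * k - 1), (-1 : ℝ) ^ (l + 1) / (Nat.factorial l) *
        ∫ x, ((derivative^[l] f).eval x) ^ 2 ∂(gaussianReal 0 1) := by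
  obtain ⟨c, hf⟩ := exists_expansion f.natDegree f le_rfl
  set M := f.natDegree + 1 with hM
  set A : ℕ → ℝ := fun n => (c n)^2 * n.factorial with hA
  have hA0 : ∀ n, 0 ≤ A n := fun n => by positivity
  -- variance
  have hIf : ∫ x, f.eval x ∂(gaussianReal 0 1) = c 0 := by
    show Ig f = c 0
    rw [hf, Ig_sum]
    have h1 : ∀ n ∈ Finset.range M, Ig (c n • H n) = if n = 0 then c n else 0 := by
      intro n _
      rw [Ig_smul, Ig_H]
      split <;> simp
    rw [Finset.sum_congr rfl h1, Finset.sum_ite_eq']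
    simp [hM]
  have hIf2 : ∫ x, f.eval x ^ 2 ∂(gaussianReal 0 1) = ∑ n ∈ Finset.range M, A n := by
    rw [← Ig_sq, hf, Ig_sq_sum]
  -- derivative integrals
  have hS : ∀ m : ℕ,
      (∑ l ∈ Finset.Icc 1 m, (-1 : ℝ) ^ (l + 1) / (Nat.factorial l) *
        ∫ x, ((derivative^[l] f).eval x) ^ 2 ∂(gaussianReal 0 1))
      = ∑ n ∈ Finset.range M, A n *
          (∑ l ∈ Finset.Icc 1 m, (-1:ℝ)^(l+1) * (n.choose l)) := by
    intro m
    have hl1 : ∀ l, (-1 : ℝ) ^ (l + 1) / (Nat.factorial l) *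
        ∫ x, ((derivative^[l] f).eval x) ^ 2 ∂(gaussianReal 0 1)
        = ∑ n ∈ Finset.range M, A n * ((-1:ℝ)^(l+1) * (n.choose l)) := by
      intro l
      rw [← Ig_sq, hf, expand_deriv, Ig_sq_sum, Finset.mul_sum]
      have term : ∀ j, (-1 : ℝ) ^ (l + 1) / (Nat.factorial l) *
          ((c (l + j) * ((l+j).descFactorial l : ℝ))^2 * j.factorial)
          = A (l+j) * ((-1:ℝ)^(l+1) * ((l+j).choose l)) := by
        intro j
        have hcast : (((l+j).descFactorial l : ℝ))^2 * j.factorial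
            = l.factorial * ((l+j).factorial * (l+j).choose l) := by
          exact_mod_cast congrArg (Nat.cast : ℕ → ℝ) (desc_fact_identity l j)
        have hlf : ((l.factorial : ℝ)) ≠ 0 := Nat.cast_ne_zero.mpr l.factorial_ne_zero
        rw [hA]
        field_simp
        linear_combination (c (l+j))^2 * hcast
      rw [Finset.sum_congr rfl (fun j _ => term j)]
      have hre : ∑ j ∈ Finset.range (M - l), A (l+j) * ((-1:ℝ)^(l+1) * ((l+j).choose l))
          = ∑ n ∈ Finset.Ico l M, A n * ((-1:ℝ)^(l+1) * (n.choose l)) := by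
        rw [Finset.sum_Ico_eq_sum_range]
      rw [hre]
      rw [Finset.range_eq_Ico]
      refine Finset.sum_subset (Finset.Ico_subset_Ico (Nat.zero_le l) le_rfl) ?_
      intro n hn hn2
      simp only [Finset.mem_Ico] at hn hn2
      have : n < l := by omega
      rw [Nat.choose_eq_zero_of_lt this]
      simp
    rw [Finset.sum_congr rfl (fun l _ => hl1 l), Finset.sum_comm]
    refine Finset.sum_congr rfl fun n _ => ?_
    rw [Finset.mul_sum]
  -- key difference formula
  have hkey : ∀ m : ℕ,
      ((∫ x, f.eval x ^ 2 ∂(gaussianReal 0 1)) -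
        (∫ x, f.eval x ∂(gaussianReal 0 1)) ^ 2)
      - (∑ l ∈ Finset.Icc 1 m, (-1 : ℝ) ^ (l + 1) / (Nat.factorial l) *
          ∫ x, ((derivative^[l] f).eval x) ^ 2 ∂(gaussianReal 0 1))
      = ∑ n ∈ Finset.range M,
          (if n = 0 then 0 else A n * ((-1:ℝ)^m * ((n-1).choose m))) := by
    intro m
    rw [hIf, hIf2, hS m]
    set U : ℕ → ℝ := fun n => A n * (1 - ∑ l ∈ Finset.Icc 1 m, (-1:ℝ)^(l+1) * (n.choose l))
      with hU
    have hz : ∑ l ∈ Finset.Icc 1 m, (-1:ℝ)^(l+1) * ((0:ℕ).choose l) = 0 := by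
      refine Finset.sum_eq_zero fun l hl => ?_
      simp only [Finset.mem_Icc] at hl
      rw [Nat.choose_eq_zero_of_lt (by omega)]
      simp
    have hU0 : U 0 = A 0 := by
      show A 0 * (1 - ∑ l ∈ Finset.Icc 1 m, (-1:ℝ)^(l+1) * ((0:ℕ).choose l)) = A 0
      rw [hz]
      ring
    have hA0c : A 0 = (c 0)^2 := by simp [hA]
    have hsum : ∑ n ∈ Finset.range M, U n = (∑ n ∈ Finset.range M, A n)
        - ∑ n ∈ Finset.range M, A n * (∑ l ∈ Finset.Icc 1 m, (-1:ℝ)^(l+1) * (n.choose l)) := by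
      rw [← Finset.sum_sub_distrib]
      refine Finset.sum_congr rfl fun n _ => ?_
      simp only [hU]
      ring
    have e1 : (∑ n ∈ Finset.range M, A n) - (c 0)^2
        - ∑ n ∈ Finset.range M, A n * (∑ l ∈ Finset.Icc 1 m, (-1:ℝ)^(l+1) * (n.choose l))
        = (∑ n ∈ Finset.range M, U n) - U 0 := by
      rw [hsum, hU0, hA0c]
      ring
    rw [e1]
    have e2 : ∀ n ∈ Finset.range M, (if n = 0 then 0 else A n * ((-1:ℝ)^m * ((n-1).choose m)))
        = U n - (if n = 0 then U n else 0) := by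
      intro n _
      by_cases hn : n = 0
      · simp [hn]
      · obtain ⟨n', rfl⟩ : ∃ n', n = n' + 1 := ⟨n - 1, by omega⟩
        simp only [if_neg hn, sub_zero, hU]
        rw [alt_binom n' m]
        simp
    rw [Finset.sum_congr rfl e2, Finset.sum_sub_distrib, Finset.sum_ite_eq']
    simp [hM]
  constructor
  · have h := hkey (2 * k)
    have hpos : 0 ≤ ∑ n ∈ Finset.range M,
        (if n = 0 then 0 else A n * ((-1:ℝ)^(2*k) * ((n-1).choose (2*k)))) := by
      refine Finset.sum_nonneg fun n _ => ?_
      split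
      · exact le_refl 0
      · rw [(even_two_mul k).neg_one_pow]
        positivity
    linarith
  · have h := hkey (2 * k - 1)
    have hneg : ∑ n ∈ Finset.range M,
        (if n = 0 then 0 else A n * ((-1:ℝ)^(2*k-1) * ((n-1).choose (2*k-1)))) ≤ 0 := by
      refine Finset.sum_nonpos fun n _ => ?_
      split
      · exact le_refl 0
      · have hodd : Odd (2*k-1) := ⟨k-1, by omega⟩
        rw [hodd.neg_one_pow]
        have : (0:ℝ) ≤ A n * ((n-1).choose (2*k-1)) := by positivity
        nlinarith
    linarith
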